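/- With v_k = 2·cos(2kπ/(2n+1)), the product Π over unordered pairs {j,k} ⊆ {1,…,n}, j ≠ k, of (v_{k+j}·v_{k−j}) equals (Π_{i=1}^{n} v_i)^{n−1}, which is (-1)^{n/2} if n is even and 1 if n is odd. -/

import Mathlib

open Real


noncomputable def sn (n : ℕ) (m : ℤ) : ℝ := Real.sin (2 * (m:ℝ) * π / (2 * (n:ℝ) + 1))

lemma denom_pos (n : ℕ) : (0:ℝ) < 2 * (n:ℝ) + 1 := by positivity

lemma sn_fold (n : ℕ) (m : ℤ) : sn n (2*n+1-m) = - sn n m := by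
  unfold sn
  have hd : (2 * (n:ℝ) + 1) ≠ 0 := ne_of_gt (denom_pos n)
  have : 2 * ((2*(n:ℤ)+1-m : ℤ) : ℝ) * π / (2 * (n:ℝ) + 1)
      = 2 * π - 2 * (m:ℝ) * π / (2 * (n:ℝ) + 1) := by
    field_simp
    push_cast
    ring
  rw [this, Real.sin_sub, Real.sin_two_pi, Real.cos_two_pi]
  ring

lemma sn_pos (n : ℕ) (m : ℤ) (h1 : 1 ≤ m) (h2 : m ≤ n) : 0 < sn n m := by
  unfold sn
  apply Real.sin_pos_of_pos_of_lt_pi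
  · have : (0:ℝ) < (m:ℝ) := by exact_mod_cast h1
    have := Real.pi_pos
    positivity
  · rw [div_lt_iff₀ (denom_pos n)]
    have hm : (m:ℝ) ≤ (n:ℝ) := by exact_mod_cast h2
    nlinarith [Real.pi_pos]

lemma v_mul_sn (n : ℕ) (v : ℤ → ℝ)
    (hv : ∀ k : ℤ, v k = 2 * Real.cos (2 * k * π / (2 * n + 1))) (m : ℤ) :
    v m * sn n m = sn n (2*m) := by
  rw [hv]
  unfold sn
  have : 2 * ((2*m : ℤ) : ℝ) * π / (2 * (n:ℝ) + 1)
      = 2 * (2 * (m:ℝ) * π / (2 * (n:ℝ) + 1)) := by push_cast; ring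
  rw [this, Real.sin_two_mul]
  ring

lemma vfold (n : ℕ) (v : ℤ → ℝ)
    (hv : ∀ k : ℤ, v k = 2 * Real.cos (2 * k * π / (2 * n + 1))) (m : ℤ) :
    v (2*n+1-m) = v m := by
  rw [hv, hv]
  have hd : (2 * (n:ℝ) + 1) ≠ 0 := ne_of_gt (denom_pos n)
  have : 2 * ((2*(n:ℤ)+1-m : ℤ) : ℝ) * π / (2 * (n:ℝ) + 1)
      = 2 * π - 2 * (m:ℝ) * π / (2 * (n:ℝ) + 1) := by
    field_simp
    push_cast
    ring
  rw [this, Real.cos_sub, Real.sin_two_pi, Real.cos_two_pi]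
  ring

lemma P_eq (n : ℕ) (v : ℤ → ℝ)
    (hv : ∀ k : ℤ, v k = 2 * Real.cos (2 * k * π / (2 * n + 1))) :
    ∏ i ∈ Finset.Icc (1:ℤ) n, v i = (-1:ℝ) ^ ((n+1)/2) := by
  have hIcc : Finset.Icc (1:ℤ) n = Finset.Ioc (0:ℤ) n := by
    ext x; simp [Finset.mem_Icc, Finset.mem_Ioc]; omega
  set T : ℝ := ∏ i ∈ Finset.Ioc (0:ℤ) n, sn n i with hT
  have hTpos : 0 < T := by
    apply Finset.prod_pos
    intro i hi
    rw [Finset.mem_Ioc] at hi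
    exact sn_pos n i (by omega) hi.2
  have h1 : (∏ i ∈ Finset.Ioc (0:ℤ) n, v i) * T = ∏ i ∈ Finset.Ioc (0:ℤ) n, sn n (2*i) := by
    rw [hT, ← Finset.prod_mul_distrib]
    exact Finset.prod_congr rfl fun i _ => v_mul_sn n v hv i
  set h : ℤ := ((n/2 : ℕ) : ℤ) with hh
  have hsplit : Finset.Ioc (0:ℤ) n = Finset.Ioc 0 h ∪ Finset.Ioc h n := by
    rw [Finset.Ioc_union_Ioc_eq_Ioc (by omega) (by omega)]
  have hdisj : Disjoint (Finset.Ioc (0:ℤ) h) (Finset.Ioc h n) := by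
    rw [Finset.disjoint_left]
    intro x hx hy
    simp only [Finset.mem_Ioc] at hx hy
    omega
  have hA : ∏ i ∈ Finset.Ioc (0:ℤ) h, sn n (2*i)
      = ∏ j ∈ (Finset.Ioc (0:ℤ) n).filter (fun j => Even j), sn n j := by
    apply Finset.prod_nbij' (fun i => 2*i) (fun j => j/2)
    · intro a ha; simp only [Finset.mem_Ioc, Finset.mem_filter, Int.even_iff] at *; omega
    · intro a ha; simp only [Finset.mem_Ioc, Finset.mem_filter, Int.even_iff] at *; omega
    · intro a ha; omega
    · intro a ha; simp only [Finset.mem_Ioc, Finset.mem_filter, Int.even_iff] at ha; omega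
    · intro a ha; rfl
  have hB : ∏ i ∈ Finset.Ioc h n, sn n (2*i)
      = (-1:ℝ)^((n+1)/2) * ∏ j ∈ (Finset.Ioc (0:ℤ) n).filter (fun j => ¬ Even j), sn n j := by
    have step1 : ∀ i ∈ Finset.Ioc h n, sn n (2*i) = - sn n (2*n+1-2*i) := by
      intro i _
      have := sn_fold n (2*n+1-2*i)
      have h2 : (2*(n:ℤ)+1 - (2*(n:ℤ)+1-2*i)) = 2*i := by ring
      rw [h2] at this
      rw [this]
    rw [Finset.prod_congr rfl step1]
    have hneg : ∀ i ∈ Finset.Ioc h (n:ℤ), - sn n (2*n+1-2*i) = (-1:ℝ) * sn n (2*n+1-2*i) :=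
      fun i _ => by ring
    rw [Finset.prod_congr rfl hneg, Finset.prod_mul_distrib, Finset.prod_const]
    have hcard : (Finset.Ioc h n).card = (n+1)/2 := by
      rw [Int.card_Ioc]; omega
    rw [hcard]
    congr 1
    apply Finset.prod_nbij' (fun i => 2*(n:ℤ)+1-2*i) (fun j => (2*(n:ℤ)+1-j)/2)
    · intro a ha; simp only [Finset.mem_Ioc, Finset.mem_filter, Int.even_iff] at *; omega
    · intro a ha; simp only [Finset.mem_Ioc, Finset.mem_filter, Int.even_iff] at *; omega
    · intro a ha; omega
    · intro a ha; simp only [Finset.mem_Ioc, Finset.mem_filter, Int.even_iff] at ha; omega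
    · intro a ha; rfl
  have h2 : ∏ i ∈ Finset.Ioc (0:ℤ) n, sn n (2*i) = (-1:ℝ)^((n+1)/2) * T := by
    rw [hsplit, Finset.prod_union hdisj, hA, hB, hT,
      ← Finset.prod_filter_mul_prod_filter_not (Finset.Ioc (0:ℤ) (n:ℤ)) (fun j => Even j) (sn n)]
    ring
  rw [hIcc]
  have := h1.trans h2
  exact mul_right_cancel₀ (ne_of_gt hTpos) this

theorem stmt_6 (n : ℕ) (hn : 0 < n) (v : ℤ → ℝ)
    (hv : ∀ k : ℤ, v k = 2 * Real.cos (2 * k * π / (2 * n + 1))) :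
    (∏ p ∈ Finset.filter (fun p : ℤ × ℤ => p.1 < p.2)
        (Finset.Icc (1 : ℤ) n ×ˢ Finset.Icc (1 : ℤ) n),
        (v (p.2 + p.1) * v (p.2 - p.1)))
      = (∏ i ∈ Finset.Icc (1 : ℤ) n, v i) ^ (n - 1) ∧
    (∏ i ∈ Finset.Icc (1 : ℤ) n, v i) ^ (n - 1) =
      if Even n then (-1 : ℝ) ^ (n / 2) else 1 := by
  set S := Finset.filter (fun p : ℤ × ℤ => p.1 < p.2)
      (Finset.Icc (1 : ℤ) n ×ˢ Finset.Icc (1 : ℤ) n) with hS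
  have hmemS : ∀ p : ℤ × ℤ, p ∈ S ↔ (1 ≤ p.1 ∧ p.1 ≤ n) ∧ (1 ≤ p.2 ∧ p.2 ≤ n) ∧ p.1 < p.2 := by
    intro p
    simp [hS, Finset.mem_filter, Finset.mem_product, Finset.mem_Icc]
    tauto
  set g : ℤ × ℤ → ℤ := fun p => if p.1 + p.2 ≤ (n:ℤ) then p.1 + p.2 else 2*n+1-p.1-p.2 with hg
  have hgmem : ∀ p ∈ S, g p ∈ Finset.Icc (1:ℤ) n := by
    intro p hp
    rw [hmemS] at hp
    simp only [hg, Finset.mem_Icc]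
    split_ifs <;> omega
  have hdmem : ∀ p ∈ S, p.2 - p.1 ∈ Finset.Icc (1:ℤ) n := by
    intro p hp
    rw [hmemS] at hp
    simp only [Finset.mem_Icc]
    omega
  have hvg : ∀ p ∈ S, v (p.2 + p.1) = v (g p) := by
    intro p hp
    simp only [hg]
    split_ifs with h
    · rw [add_comm]
    · rw [show (2*(n:ℤ)+1-p.1-p.2) = 2*(n:ℤ)+1-(p.2+p.1) by ring, vfold n v hv]
  have memF : ∀ (c : ℤ × ℤ → ℤ) (i x y : ℤ), ((x,y) ∈ S.filter (fun p => c p = i)) ↔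
      (((1 ≤ x ∧ x ≤ (n:ℤ)) ∧ (1 ≤ y ∧ y ≤ (n:ℤ)) ∧ x < y) ∧ c (x,y) = i) := by
    intro c i x y
    rw [Finset.mem_filter, hmemS]
  -- card of sum-fibers
  have csum : ∀ i : ℤ, 1 ≤ i → i ≤ n →
      (S.filter (fun p => g p = i)).card = (i-1).toNat := by
    intro i h1 h2
    have : (i-1).toNat = (Finset.Icc (1:ℤ) (i-1)).card := by rw [Int.card_Icc]; omega
    rw [this]
    apply Finset.card_nbij'
      (i := fun p => if p.1 + p.2 = i then 2*p.1 else 2*p.1 + 2*i - 2*(n:ℤ) - 1)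
      (j := fun j => if j % 2 = 0 then ((j/2 : ℤ), i - j/2)
        else ((j + 2*(n:ℤ) + 1 - 2*i)/2, 2*(n:ℤ)+1-i - (j + 2*(n:ℤ)+1-2*i)/2))
    · intro a ha
      rw [Finset.mem_coe] at ha ⊢
      obtain ⟨x, y⟩ := a
      rw [memF] at ha
      simp only [hg] at ha
      rw [Finset.mem_Icc]
      dsimp only
      split_ifs at ha ⊢ <;> omega
    · intro a ha
      rw [Finset.mem_coe] at ha ⊢
      rw [Finset.mem_Icc] at ha
      beta_reduce
      by_cases hpar : a % 2 = 0
      · rw [if_pos hpar, memF]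
        simp only [hg]
        split_ifs <;> omega
      · rw [if_neg hpar, memF]
        simp only [hg]
        split_ifs <;> omega
    · intro a ha
      rw [Finset.mem_coe] at ha
      obtain ⟨x, y⟩ := a
      rw [memF] at ha
      simp only [hg] at ha
      dsimp only
      split_ifs at ha ⊢ <;> rw [Prod.mk.injEq] <;> constructor <;> omega
    · intro a ha
      rw [Finset.mem_coe] at ha
      rw [Finset.mem_Icc] at ha
      beta_reduce
      by_cases hpar : a % 2 = 0
      · rw [if_pos hpar]
        dsimp only
        split_ifs <;> omega
      · rw [if_neg hpar]
        dsimp only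
        split_ifs <;> omega
  -- card of diff-fibers
  have cdiff : ∀ i : ℤ, 1 ≤ i → i ≤ n →
      (S.filter (fun p => p.2 - p.1 = i)).card = ((n:ℤ)-i).toNat := by
    intro i h1 h2
    have : ((n:ℤ)-i).toNat = (Finset.Icc (1:ℤ) ((n:ℤ)-i)).card := by rw [Int.card_Icc]; omega
    rw [this]
    apply Finset.card_nbij' (i := fun p => p.1) (j := fun j => (j, j + i))
    · intro a ha
      rw [Finset.mem_coe] at ha ⊢
      obtain ⟨x, y⟩ := a
      rw [memF] at ha
      dsimp only at ha ⊢
      rw [Finset.mem_Icc]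
      omega
    · intro a ha
      rw [Finset.mem_coe] at ha ⊢
      rw [Finset.mem_Icc] at ha
      rw [memF]
      dsimp only
      omega
    · intro a ha
      rw [Finset.mem_coe] at ha
      obtain ⟨x, y⟩ := a
      rw [memF] at ha
      dsimp only at ha ⊢
      rw [Prod.mk.injEq]
      constructor <;> omega
    · intro a ha
      rfl
  -- fiberwise products
  have fib : ∀ (G : ℤ × ℤ → ℤ), (∀ p ∈ S, G p ∈ Finset.Icc (1:ℤ) n) →
      ∏ p ∈ S, v (G p) = ∏ y ∈ Finset.Icc (1:ℤ) n, v y ^ (S.filter (fun p => G p = y)).card := by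
    intro G hG
    rw [← Finset.prod_fiberwise_of_maps_to hG (fun p => v (G p))]
    apply Finset.prod_congr rfl
    intro y _
    rw [← Finset.prod_const]
    apply Finset.prod_congr rfl
    intro p hp
    rw [Finset.mem_filter] at hp
    rw [hp.2]
  have part1 : (∏ p ∈ S, (v (p.2 + p.1) * v (p.2 - p.1)))
      = (∏ i ∈ Finset.Icc (1 : ℤ) n, v i) ^ (n - 1) := by
    calc ∏ p ∈ S, (v (p.2 + p.1) * v (p.2 - p.1))
        = ∏ p ∈ S, (v (g p) * v (p.2 - p.1)) :=
          Finset.prod_congr rfl (fun p hp => by rw [hvg p hp])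
      _ = (∏ p ∈ S, v (g p)) * ∏ p ∈ S, v (p.2 - p.1) := Finset.prod_mul_distrib
      _ = (∏ y ∈ Finset.Icc (1:ℤ) n, v y ^ (S.filter (fun p => g p = y)).card)
          * ∏ y ∈ Finset.Icc (1:ℤ) n, v y ^ (S.filter (fun p => p.2 - p.1 = y)).card := by
          rw [fib g hgmem, fib (fun p => p.2 - p.1) hdmem]
      _ = ∏ y ∈ Finset.Icc (1:ℤ) n, v y ^ (n-1) := by
          rw [← Finset.prod_mul_distrib]
          apply Finset.prod_congr rfl
          intro y hy
          rw [Finset.mem_Icc] at hy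
          rw [csum y hy.1 hy.2, cdiff y hy.1 hy.2, ← pow_add]
          congr 1
          omega
      _ = (∏ i ∈ Finset.Icc (1 : ℤ) n, v i) ^ (n - 1) := by rw [Finset.prod_pow]
  refine ⟨part1, ?_⟩
  rw [P_eq n v hv, ← pow_mul]
  rcases Nat.even_or_odd n with he | ho
  · obtain ⟨m, hm⟩ := he
    have hm1 : 1 ≤ m := by omega
    rw [if_pos (show Even n from ⟨m, hm⟩)]
    have e1 : (n+1)/2 = m := by omega
    have e2 : n/2 = m := by omega
    have e3 : n - 1 = 2*m - 1 := by omega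
    rw [e1, e2, e3]
    rcases Nat.even_or_odd m with hem | hom
    · rw [Even.neg_one_pow (hem.mul_right _), Even.neg_one_pow hem]
    · rw [Odd.neg_one_pow (hom.mul ⟨m-1, by omega⟩), Odd.neg_one_pow hom]
  · rw [if_neg (by simp [Nat.odd_iff] at ho ⊢; omega)]
    apply Even.neg_one_pow
    apply Even.mul_left
    obtain ⟨m, hm⟩ := ho
    exact ⟨m, by omega⟩
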